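/- Let N : ℕ → ℕ → ℕ satisfy the recurrence N(ℓ,1) = 1 for all ℓ ≥ 1; N(1,m) = m − 1 for all m ≥ 2; N(ℓ,m) = N(m,m) for all ℓ > m ≥ 2; and N(ℓ,m) = ∑_{j=1}^{m−1} N(ℓ−1,j) for all 2 ≤ ℓ ≤ m. Define T(ℓ,m) := N(ℓ,m) − N(ℓ−1,m). Then for all m ≥ 4, T(m−2, m) = 1. -/

import Mathlib

theorem T_boundary_one
    (N : ℕ → ℕ → ℕ)
    (h1 : ∀ l, 1 ≤ l → N l 1 = 1)
    (h2 : ∀ m, 2 ≤ m → N 1 m = m - 1)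
    (h3 : ∀ l m, 2 ≤ m → m < l → N l m = N m m)
    (h4 : ∀ l m, 2 ≤ l → l ≤ m → N l m = ∑ j ∈ Finset.Icc 1 (m - 1), N (l - 1) j)
    (T : ℕ → ℕ → ℤ)
    (hT : ∀ l m, T l m = (N l m : ℤ) - (N (l - 1) m : ℤ)) :
    ∀ m, 4 ≤ m → T (m - 2) m = 1 := by
  -- Key cancellation lemma
  have key : ∀ l m, 3 ≤ l → l ≤ m →
      (N l m : ℤ) - N (l - 1) m
        = ∑ j ∈ Finset.Icc (l - 1) (m - 1), ((N (l - 1) j : ℤ) - N (l - 2) j) := by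
    intro l m hl hm
    have e1 : N l m = ∑ j ∈ Finset.Icc 1 (m - 1), N (l - 1) j := h4 l m (by omega) hm
    have e2 : N (l - 1) m = ∑ j ∈ Finset.Icc 1 (m - 1), N (l - 1 - 1) j :=
      h4 (l - 1) m (by omega) (by omega)
    have hll : l - 1 - 1 = l - 2 := by omega
    rw [e1, e2, hll]
    push_cast
    rw [← Finset.sum_sub_distrib]
    have hsplit : Finset.Icc 1 (m - 1) = Finset.Icc 1 (l - 2) ∪ Finset.Icc (l - 1) (m - 1) := by
      ext x
      simp only [Finset.mem_union, Finset.mem_Icc]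
      omega
    have hdisj : Disjoint (Finset.Icc 1 (l - 2)) (Finset.Icc (l - 1) (m - 1)) := by
      rw [Finset.disjoint_left]
      intro x hx hx'
      simp only [Finset.mem_Icc] at hx hx'
      omega
    rw [hsplit, Finset.sum_union hdisj]
    have hzero : ∑ j ∈ Finset.Icc 1 (l - 2), ((N (l - 1) j : ℤ) - N (l - 2) j) = 0 := by
      apply Finset.sum_eq_zero
      intro j hj
      simp only [Finset.mem_Icc] at hj
      rcases Nat.lt_or_ge j 2 with hj2 | hj2
      · have : j = 1 := by omega
        subst this
        rw [h1 (l - 1) (by omega), h1 (l - 2) (by omega)]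
        ring
      · have ha : N (l - 1) j = N j j := h3 (l - 1) j hj2 (by omega)
        have hb : N (l - 2) j = N j j := by
          rcases Nat.lt_or_ge j (l - 2) with h | h
          · exact h3 (l - 2) j hj2 h
          · have : j = l - 2 := by omega
            subst this; rfl
        rw [ha, hb]; ring
    rw [hzero, zero_add]
  -- T on the diagonal is 0
  have Tdiag : ∀ l, 2 ≤ l → (N l l : ℤ) - N (l - 1) l = 0 := by
    intro l hl
    induction l with
    | zero => omega
    | succ n ih =>
      rcases Nat.lt_or_ge n 2 with hn | hn
      · have : n = 1 := by omega
        subst this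
        have e1 : N 2 2 = ∑ j ∈ Finset.Icc 1 1, N 1 j := h4 2 2 le_rfl le_rfl
        simp only [Finset.Icc_self, Finset.sum_singleton] at e1
        rw [e1, h1 1 le_rfl, h2 2 le_rfl]
        norm_num
      · have := key (n + 1) (n + 1) (by omega) le_rfl
        rw [this]
        have : Finset.Icc (n + 1 - 1) (n + 1 - 1) = {n} := by
          simp
        rw [this, Finset.sum_singleton]
        have h1' : n + 1 - 1 = n := by omega
        have h2' : n + 1 - 2 = n - 1 := by omega
        rw [h1', h2']
        exact ih hn
  -- T just above the diagonal is 0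
  have Tsup : ∀ l, 2 ≤ l → (N l (l + 1) : ℤ) - N (l - 1) (l + 1) = 0 := by
    intro l hl
    induction l with
    | zero => omega
    | succ n ih =>
      rcases Nat.lt_or_ge n 2 with hn | hn
      · have : n = 1 := by omega
        subst this
        have e1 : N 2 3 = ∑ j ∈ Finset.Icc 1 2, N 1 j := h4 2 3 le_rfl (by omega)
        have : ∑ j ∈ Finset.Icc 1 2, N 1 j = N 1 1 + N 1 2 := by
          rw [Finset.sum_Icc_succ_top (by omega)]
          simp
        rw [e1, this, h1 1 le_rfl, h2 2 le_rfl, h2 3 (by omega)]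
        norm_num
      · have := key (n + 1) (n + 2) (by omega) (by omega)
        have hIcc : Finset.Icc (n + 1 - 1) (n + 2 - 1) = Finset.Icc n (n + 1) := by
          norm_num
        show (N (n+1) (n+2) : ℤ) - N (n+1-1) (n+2) = 0
        rw [this, hIcc, Finset.sum_Icc_succ_top (by omega), Finset.Icc_self,
          Finset.sum_singleton]
        have h1' : n + 1 - 1 = n := by omega
        have h2' : n + 1 - 2 = n - 1 := by omega
        rw [h1', h2']
        rw [Tdiag n hn, ih hn]
        ring
  -- T two above the diagonal is 1
  have T2 : ∀ l, 2 ≤ l → (N l (l + 2) : ℤ) - N (l - 1) (l + 2) = 1 := by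
    intro l hl
    induction l with
    | zero => omega
    | succ n ih =>
      rcases Nat.lt_or_ge n 2 with hn | hn
      · have : n = 1 := by omega
        subst this
        have e1 : N 2 4 = ∑ j ∈ Finset.Icc 1 3, N 1 j := h4 2 4 le_rfl (by omega)
        have : ∑ j ∈ Finset.Icc 1 3, N 1 j = N 1 1 + N 1 2 + N 1 3 := by
          rw [Finset.sum_Icc_succ_top (by omega), Finset.sum_Icc_succ_top (by omega)]
          simp
        rw [e1, this, h1 1 le_rfl, h2 2 le_rfl, h2 3 (by omega), h2 4 (by omega)]
        norm_num
      · have := key (n + 1) (n + 3) (by omega) (by omega)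
        have hIcc : Finset.Icc (n + 1 - 1) (n + 3 - 1) = Finset.Icc n (n + 2) := by
          norm_num
        show (N (n+1) (n+3) : ℤ) - N (n+1-1) (n+3) = 1
        rw [this, hIcc, Finset.sum_Icc_succ_top (by omega),
          Finset.sum_Icc_succ_top (by omega), Finset.Icc_self, Finset.sum_singleton]
        have h1' : n + 1 - 1 = n := by omega
        have h2' : n + 1 - 2 = n - 1 := by omega
        rw [h1', h2']
        rw [Tdiag n hn, Tsup n hn, ih hn]
        ring
  intro m hm
  rw [hT]
  have hl : m - 2 - 1 = m - 3 := by omega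
  have hm2 : m = (m - 2) + 2 := by omega
  rw [hl]
  have := T2 (m - 2) (by omega)
  rw [show m - 2 - 1 = m - 3 from by omega] at this
  rw [← hm2] at this
  exact this
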